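/- Let U_1, U_2, …, U_m be pairwise non-isomorphic finite nonabelian simple groups and let e_1, …, e_m be natural numbers. Then μ(U_1^{e_1} × U_2^{e_2} × ⋯ × U_m^{e_m}) = μ(U_1^{e_1}) · μ(U_2^{e_2}) ⋯ μ(U_m^{e_m}). -/

import Mathlib

universe u v

open Finset IncidenceAlgebra

section MuLemmas

lemma mu_hcongr {α : Type*} [Preorder α] {L1 L2 : LocallyFiniteOrder α}
    {D1 D2 : DecidableEq α} (a b : α) :
    @IncidenceAlgebra.mu ℤ α _ _ _ L1 D1 a b = @IncidenceAlgebra.mu ℤ α _ _ _ L2 D2 a b := by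
  obtain rfl : L1 = L2 := Subsingleton.elim _ _
  obtain rfl : D1 = D2 := Subsingleton.elim _ _
  rfl

end MuLemmas

/-- The Möbius function of the subgroup lattice of a finite group `G`,
evaluated at a pair of subgroups. -/
noncomputable def subgroupMu (G : Type*) [Group G] [Finite G] (H K : Subgroup G) : ℤ :=
  letI : Fintype (Subgroup G) := Fintype.ofFinite _
  letI : DecidableEq (Subgroup G) := Classical.decEq _
  letI : DecidableRel (α := Subgroup G) (· < ·) := Classical.decRel _
  letI : DecidableRel (α := Subgroup G) (· ≤ ·) := Classical.decRel _
  letI := Fintype.toLocallyFiniteOrder (α := Subgroup G)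
  IncidenceAlgebra.mu ℤ H K

/-- The Möbius number of a finite group `G`: the value `μ(⊥, ⊤)` of the Möbius
function of its lattice of subgroups. -/
noncomputable def muGrp (G : Type*) [Group G] [Finite G] : ℤ :=
  subgroupMu G ⊥ ⊤

lemma subgroupMu_eq (G : Type*) [Group G] [Finite G]
    (L : LocallyFiniteOrder (Subgroup G)) (D : DecidableEq (Subgroup G)) (H K : Subgroup G) :
    subgroupMu G H K = @IncidenceAlgebra.mu ℤ _ _ _ _ L D H K := by
  unfold subgroupMu
  exact mu_hcongr _ _

lemma subgroupMu_self (G : Type*) [Group G] [Finite G] (H : Subgroup G) :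
    subgroupMu G H H = 1 := by
  unfold subgroupMu
  simp

lemma muGrp_trivial (G : Type*) [Group G] [Finite G] [Subsingleton G] : muGrp G = 1 := by
  have hbt : (⊥ : Subgroup G) = ⊤ := by
    ext x
    simp [Subgroup.mem_bot, Subsingleton.elim x 1]
  show subgroupMu G ⊥ ⊤ = 1
  rw [hbt]
  exact subgroupMu_self G ⊤

lemma mu_orderIso {α β : Type*} [PartialOrder α] [PartialOrder β]
    [LocallyFiniteOrder α] [LocallyFiniteOrder β] [DecidableEq α] [DecidableEq β]
    [WellFoundedLT α] (f : α ≃o β) (a b : α) : mu ℤ (f a) (f b) = mu ℤ a b := by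
  induction b using WellFoundedLT.induction with
  | ind b ih =>
    rcases eq_or_ne a b with rfl | hab
    · simp
    · have hfab : f a ≠ f b := fun h => hab (f.injective h)
      rw [mu_eq_neg_sum_Ico_of_ne hab, mu_eq_neg_sum_Ico_of_ne hfab]
      have himg : Ico (f a) (f b) = (Ico a b).image f := by
        ext y
        simp only [mem_Ico, mem_image]
        constructor
        · rintro ⟨h1, h2⟩
          refine ⟨f.symm y, ⟨?_, ?_⟩, f.apply_symm_apply y⟩
          · rwa [← f.apply_symm_apply y, f.le_iff_le] at h1
          · rwa [← f.apply_symm_apply y, f.lt_iff_lt] at h2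
        · rintro ⟨x, ⟨h1, h2⟩, rfl⟩
          exact ⟨f.le_iff_le.2 h1, f.lt_iff_lt.2 h2⟩
      rw [himg, Finset.sum_image (fun x _ y _ h => f.injective h)]
      congr 1
      exact Finset.sum_congr rfl fun x hx => ih x (mem_Ico.1 hx).2

lemma muGrp_congr {G G' : Type*} [Group G] [Group G'] [Finite G] [Finite G']
    (e : G ≃* G') : muGrp G = muGrp G' := by
  classical
  letI : Fintype (Subgroup G) := Fintype.ofFinite _
  letI : Fintype (Subgroup G') := Fintype.ofFinite _
  letI : DecidableRel (α := Subgroup G) (· < ·) := Classical.decRel _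
  letI : DecidableRel (α := Subgroup G) (· ≤ ·) := Classical.decRel _
  letI : DecidableRel (α := Subgroup G') (· < ·) := Classical.decRel _
  letI : DecidableRel (α := Subgroup G') (· ≤ ·) := Classical.decRel _
  letI LG : LocallyFiniteOrder (Subgroup G) := Fintype.toLocallyFiniteOrder
  letI LG' : LocallyFiniteOrder (Subgroup G') := Fintype.toLocallyFiniteOrder
  have h := mu_orderIso (e.mapSubgroup) (⊥ : Subgroup G) (⊤ : Subgroup G)
  rw [map_bot, map_top] at h
  rw [muGrp, muGrp, subgroupMu_eq G LG (Classical.decEq _),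
    subgroupMu_eq G' LG' (Classical.decEq _)]
  exact h.symm
lemma rota_sum {α β : Type*} [PartialOrder α] [PartialOrder β] [OrderBot α] [OrderBot β]
    [Fintype α] [Fintype β] [DecidableEq α] [DecidableEq β]
    [LocallyFiniteOrder α] [LocallyFiniteOrder β]
    (f : α → β) (g : β → α) (gc : GaloisConnection f g)
    (hbot : ∀ x, f x = ⊥ ↔ x = ⊥) (hsurj : Function.Surjective f) (b : β) :
    ∑ x ∈ univ.filter (fun x => f x = b), mu ℤ ⊥ x = mu ℤ ⊥ b := by
  induction b using WellFoundedLT.induction with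
  | ind b ih =>
    classical
    have key : ∀ c : β, ∑ b' ∈ Iic c, ∑ x ∈ univ.filter (fun x => f x = b'), mu ℤ (⊥ : α) x
        = (if (⊥ : β) = c then 1 else 0 : ℤ) := by
      intro c
      have h1 : ∑ b' ∈ Iic c,
          ∑ x ∈ (univ.filter (fun x => f x ≤ c)).filter (fun x => f x = b'), mu ℤ (⊥ : α) x
          = ∑ x ∈ univ.filter (fun x => f x ≤ c), mu ℤ (⊥ : α) x :=
        Finset.sum_fiberwise_of_maps_to
          (fun x hx => by simpa using (Finset.mem_filter.1 hx).2) _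
      have h2 : ∀ b' ∈ Iic c,
          (univ.filter (fun x => f x ≤ c)).filter (fun x => f x = b')
            = univ.filter (fun x => f x = b') := by
        intro b' hb'
        ext x
        simp only [Finset.mem_filter, Finset.mem_univ, true_and]
        exact ⟨And.right, fun h => ⟨h ▸ mem_Iic.1 hb', h⟩⟩
      have h3 : univ.filter (fun x => f x ≤ c) = Iic (g c) := by
        ext x; simp [gc x c]
      have h4 : ((⊥ : α) = g c) ↔ ((⊥ : β) = c) := by
        constructor
        · intro h
          obtain ⟨x, rfl⟩ := hsurj c
          have hx : x ≤ g (f x) := gc.le_u le_rfl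
          rw [← h, le_bot_iff] at hx
          subst hx
          exact ((hbot ⊥).2 rfl).symm
        · rintro rfl
          have : g ⊥ ≤ ⊥ := by
            have := gc.l_u_le (⊥ : β)
            rw [le_bot_iff, hbot] at this
            exact this.le
          exact (le_bot_iff.1 this).symm
      calc ∑ b' ∈ Iic c, ∑ x ∈ univ.filter (fun x => f x = b'), mu ℤ (⊥ : α) x
          = ∑ b' ∈ Iic c,
            ∑ x ∈ (univ.filter (fun x => f x ≤ c)).filter (fun x => f x = b'),
              mu ℤ (⊥ : α) x := Finset.sum_congr rfl (fun b' hb' => by rw [h2 b' hb'])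
        _ = ∑ x ∈ univ.filter (fun x => f x ≤ c), mu ℤ (⊥ : α) x := h1
        _ = ∑ x ∈ Icc (⊥ : α) (g c), mu ℤ (⊥ : α) x := by rw [h3, ← Finset.Iic_eq_Icc]
        _ = if (⊥ : α) = g c then 1 else 0 := sum_Icc_mu_right _ _
        _ = if (⊥ : β) = c then 1 else 0 := by rw [if_congr h4 rfl rfl]
    have hbnot : b ∉ Iio b := by simp
    have hsplit := key b
    rw [← Finset.Iio_insert, Finset.sum_insert hbnot] at hsplit
    have hIH : ∑ b' ∈ Iio b, (∑ x ∈ univ.filter (fun x => f x = b'), mu ℤ (⊥ : α) x)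
        = ∑ b' ∈ Iio b, mu ℤ (⊥ : β) b' :=
      Finset.sum_congr rfl (fun b' hb' => ih b' (Finset.mem_Iio.1 hb'))
    have hmu : mu ℤ (⊥ : β) b + ∑ b' ∈ Iio b, mu ℤ (⊥ : β) b'
        = if (⊥ : β) = b then 1 else 0 := by
      have h5 := sum_Icc_mu_right (𝕜 := ℤ) (⊥ : β) b
      rw [← Finset.Iic_eq_Icc, ← Finset.Iio_insert, Finset.sum_insert hbnot] at h5
      linarith [h5]
    rw [hIH] at hsplit
    linarith [hsplit, hmu]

lemma muGrp_prod {A B : Type*} [Group A] [Group B] [Finite A] [Finite B]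
    (hkey : ∀ H : Subgroup (A × B), H.map (MonoidHom.fst A B) = ⊤ →
      H.map (MonoidHom.snd A B) = ⊤ → H = ⊤) :
    muGrp (A × B) = muGrp A * muGrp B := by
  classical
  letI : Fintype (Subgroup A) := Fintype.ofFinite _
  letI : Fintype (Subgroup B) := Fintype.ofFinite _
  letI : Fintype (Subgroup (A × B)) := Fintype.ofFinite _
  letI : DecidableRel (α := Subgroup A) (· < ·) := Classical.decRel _
  letI : DecidableRel (α := Subgroup A) (· ≤ ·) := Classical.decRel _
  letI : DecidableRel (α := Subgroup B) (· < ·) := Classical.decRel _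
  letI : DecidableRel (α := Subgroup B) (· ≤ ·) := Classical.decRel _
  letI : DecidableRel (α := Subgroup (A × B)) (· < ·) := Classical.decRel _
  letI : DecidableRel (α := Subgroup (A × B)) (· ≤ ·) := Classical.decRel _
  letI LA : LocallyFiniteOrder (Subgroup A) := Fintype.toLocallyFiniteOrder
  letI LB : LocallyFiniteOrder (Subgroup B) := Fintype.toLocallyFiniteOrder
  letI LAB : LocallyFiniteOrder (Subgroup (A × B)) := Fintype.toLocallyFiniteOrder
  letI : DecidableRel (α := Subgroup A × Subgroup B) (· ≤ ·) := Classical.decRel _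
  letI : DecidableRel (α := Subgroup A × Subgroup B) (· < ·) := Classical.decRel _
  set f : Subgroup (A × B) → Subgroup A × Subgroup B :=
    fun H => (H.map (MonoidHom.fst A B), H.map (MonoidHom.snd A B)) with hfdef
  set g : Subgroup A × Subgroup B → Subgroup (A × B) :=
    fun K => K.1.prod K.2 with hgdef
  have gc : GaloisConnection f g := by
    intro H K
    constructor
    · intro h
      rw [hgdef]
      exact Subgroup.le_prod_iff.2 ⟨h.1, h.2⟩
    · intro h
      have := Subgroup.le_prod_iff.1 h
      exact ⟨this.1, this.2⟩
  have hbot : ∀ x, f x = ⊥ ↔ x = ⊥ := by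
    intro x
    constructor
    · intro h
      have h1 : x.map (MonoidHom.fst A B) = ⊥ := congrArg Prod.fst h
      have h2 : x.map (MonoidHom.snd A B) = ⊥ := congrArg Prod.snd h
      rw [eq_bot_iff]
      rintro ⟨a, b⟩ hab
      have ha : a ∈ x.map (MonoidHom.fst A B) := ⟨(a, b), hab, rfl⟩
      have hb : b ∈ x.map (MonoidHom.snd A B) := ⟨(a, b), hab, rfl⟩
      rw [h1, Subgroup.mem_bot] at ha
      rw [h2, Subgroup.mem_bot] at hb
      subst ha; subst hb
      exact Subgroup.one_mem _
    · rintro rfl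
      rw [hfdef]
      simp only [Subgroup.map_bot]
      rfl
  have hsurj : Function.Surjective f := by
    rintro ⟨K₁, K₂⟩
    refine ⟨K₁.prod K₂, ?_⟩
    rw [hfdef]
    have hm1 : (K₁.prod K₂).map (MonoidHom.fst A B) = K₁ := by
      ext a
      constructor
      · rintro ⟨⟨a', b'⟩, hmem, rfl⟩
        exact (Subgroup.mem_prod.1 hmem).1
      · intro ha
        exact ⟨(a, 1), Subgroup.mem_prod.2 ⟨ha, Subgroup.one_mem _⟩, rfl⟩
    have hm2 : (K₁.prod K₂).map (MonoidHom.snd A B) = K₂ := by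
      ext b
      constructor
      · rintro ⟨⟨a', b'⟩, hmem, rfl⟩
        exact (Subgroup.mem_prod.1 hmem).2
      · intro hb
        exact ⟨(1, b), Subgroup.mem_prod.2 ⟨Subgroup.one_mem _, hb⟩, rfl⟩
    dsimp only
    rw [hm1, hm2]
  have h := rota_sum f g gc hbot hsurj (⊤ : Subgroup A × Subgroup B)
  have hfilter : (univ.filter (fun H => f H = (⊤ : Subgroup A × Subgroup B)))
      = {(⊤ : Subgroup (A × B))} := by
    ext H
    simp only [Finset.mem_filter, Finset.mem_univ, true_and, Finset.mem_singleton]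
    constructor
    · intro hH
      exact hkey H (congrArg Prod.fst hH) (congrArg Prod.snd hH)
    · rintro rfl
      rw [hfdef]
      dsimp only
      rw [Subgroup.map_top_of_surjective (MonoidHom.fst A B) (fun a => ⟨(a, 1), rfl⟩),
        Subgroup.map_top_of_surjective (MonoidHom.snd A B) (fun b => ⟨(1, b), rfl⟩)]
      rfl
  rw [hfilter, Finset.sum_singleton] at h
  have hmm := IncidenceAlgebra.mu_prod_mu ℤ (α := Subgroup A) (β := Subgroup B)
  have hprod : ((mu ℤ).prod (mu ℤ) : IncidenceAlgebra ℤ (Subgroup A × Subgroup B))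
      (⊥ : Subgroup A × Subgroup B) (⊤ : Subgroup A × Subgroup B)
      = (mu ℤ) (⊥ : Subgroup A) (⊤ : Subgroup A) * (mu ℤ) (⊥ : Subgroup B) (⊤ : Subgroup B) :=
    IncidenceAlgebra.prod_apply _ _ _ _
  rw [hmm] at hprod
  rw [muGrp, muGrp, muGrp, subgroupMu_eq (A × B) LAB (Classical.decEq _),
    subgroupMu_eq A LA (Classical.decEq _), subgroupMu_eq B LB (Classical.decEq _)]
  refine Eq.trans (mu_hcongr _ _) (Eq.trans h (Eq.trans (mu_hcongr _ _) (Eq.trans hprod ?_)))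
  exact congrArg₂ (· * ·) (mu_hcongr _ _) (mu_hcongr _ _)


lemma exists_max_normal (Q : Type u) [Group Q] [Finite Q] [Nontrivial Q] :
    ∃ N : Subgroup Q, N.Normal ∧ N ≠ ⊤ ∧
      ∀ K : Subgroup Q, K.Normal → K ≠ ⊤ → N ≤ K → N = K := by
  classical
  obtain ⟨N, ⟨hNnorm, hNne⟩, hmax⟩ :=
    Set.Finite.exists_maximalFor id {N : Subgroup Q | N.Normal ∧ N ≠ ⊤} (Set.toFinite _)
      ⟨⊥, inferInstance, bot_ne_top⟩
  exact ⟨N, hNnorm, hNne, fun K hK1 hK2 hNK => le_antisymm hNK (hmax ⟨hK1, hK2⟩ hNK)⟩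

lemma simple_of_max_normal {Q : Type u} [Group Q] (N : Subgroup Q) [nm : N.Normal]
    (hne : N ≠ ⊤) (hmax : ∀ K : Subgroup Q, K.Normal → K ≠ ⊤ → N ≤ K → N = K) :
    IsSimpleGroup (Q ⧸ N) := by
  have hmk : Function.Surjective (QuotientGroup.mk' N) := QuotientGroup.mk'_surjective N
  have hnt : Nontrivial (Q ⧸ N) := by
    obtain ⟨x, hx⟩ : ∃ x, x ∉ N := by
      by_contra h
      push_neg at h
      exact hne ((Subgroup.eq_top_iff' N).2 h)
    exact ⟨QuotientGroup.mk x, 1, by simpa [QuotientGroup.eq_one_iff] using hx⟩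
  refine ⟨fun K hK => ?_⟩
  set K' : Subgroup Q := K.comap (QuotientGroup.mk' N) with hK'def
  have hNK' : N ≤ K' := by
    intro x hx
    simp only [hK'def, Subgroup.mem_comap]
    have : QuotientGroup.mk' N x = 1 := by
      simpa [QuotientGroup.eq_one_iff] using hx
    rw [this]; exact K.one_mem
  have hK'norm : K'.Normal := hK.comap _
  have hmapcomap := Subgroup.map_comap_eq_self_of_surjective hmk K
  by_cases htop : K' = ⊤
  · right
    rw [← hmapcomap, ← hK'def, htop, Subgroup.map_top_of_surjective _ hmk]
  · left
    have hKN : N = K' := hmax K' hK'norm htop hNK'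
    rw [← hmapcomap, ← hK'def, ← hKN, eq_bot_iff]
    rintro y ⟨x, hx, rfl⟩
    simpa [QuotientGroup.eq_one_iff] using hx

lemma simple_quotient_of_pi {J : Type v} [Fintype J] (V : J → Type u) [∀ j, Group (V j)]
    (hs : ∀ j, IsSimpleGroup (V j)) {S : Type*} [Group S] (hS : IsSimpleGroup S)
    (φ : (∀ j, V j) →* S) (hφ : Function.Surjective φ) :
    ∃ j, Nonempty (V j ≃* S) := by
  classical
  letI := hS
  set ϕ : ∀ j, V j →* S := fun j => φ.comp (MonoidHom.mulSingle V j) with hϕ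
  have hcommP : Pairwise fun j k => ∀ (x : V j) (y : V k), Commute (ϕ j x) (ϕ k y) :=
    fun j k hjk x y => (Pi.mulSingle_commute hjk x y).map φ
  set W : J → Subgroup S := fun j => (ϕ j).range with hW
  have hmem : ∀ (j) (x : V j), φ (Pi.mulSingle j x) ∈ W j := fun j x => ⟨x, rfl⟩
  have happ : ∀ (j) (x : V j), ϕ j x = φ (Pi.mulSingle j x) := fun j x => rfl
  have hco : MonoidHom.noncommPiCoprod ϕ hcommP = φ := by
    have := (MonoidHom.noncommPiCoprodEquiv (N := V) (M := S)).right_inv φ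
    exact this
  have hsup : (⨆ j, W j) = ⊤ := by
    have h1 := MonoidHom.noncommPiCoprod_range ϕ (hcomm := hcommP)
    rw [hco, MonoidHom.range_eq_top.2 hφ] at h1
    exact h1.symm
  have hcomm : ∀ {j k}, j ≠ k → ∀ (x : V j) (y : V k),
      Commute (φ (Pi.mulSingle j x)) (φ (Pi.mulSingle k y)) := by
    intro j k hjk x y
    exact (Pi.mulSingle_commute hjk x y).map φ
  have hnormal : ∀ j, (W j).Normal := by
    intro j
    rw [← Subgroup.normalizer_eq_top_iff, eq_top_iff, ← hsup]
    refine iSup_le fun k => ?_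
    rcases eq_or_ne k j with rfl | hkj
    · exact Subgroup.le_normalizer
    · rintro s ⟨y, rfl⟩
      rw [happ k y, Subgroup.mem_normalizer_iff]
      intro h
      constructor
      · rintro ⟨x, rfl⟩
        rw [happ j x]
        have c : Commute (φ (Pi.mulSingle k y)) (φ (Pi.mulSingle j x)) := hcomm hkj y x
        have heq : φ (Pi.mulSingle k y) * φ (Pi.mulSingle j x) * (φ (Pi.mulSingle k y))⁻¹
            = φ (Pi.mulSingle j x) := by rw [c.eq, mul_inv_cancel_right]
        rw [heq]
        exact hmem j x
      · rintro ⟨x, hx⟩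
        rw [happ j x] at hx
        have c : Commute (φ (Pi.mulSingle k y)) (φ (Pi.mulSingle j x)) := hcomm hkj y x
        have h2 : φ (Pi.mulSingle k y) * h * (φ (Pi.mulSingle k y))⁻¹
            = φ (Pi.mulSingle j x) := hx.symm
        have h3 : h = (φ (Pi.mulSingle k y))⁻¹ * φ (Pi.mulSingle j x) * φ (Pi.mulSingle k y) := by
          rw [← h2]; group
        rw [h3, c.inv_left.eq, inv_mul_cancel_right]
        exact hmem j x
  have hex : ∃ j, W j = ⊤ := by
    by_contra hc
    push_neg at hc
    have hb : ∀ j, W j = ⊥ := fun j =>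
      (hS.eq_bot_or_eq_top_of_normal _ (hnormal j)).resolve_right (hc j)
    have : (⊤ : Subgroup S) = ⊥ := by rw [← hsup]; simp [hb]
    exact absurd this.symm bot_ne_top
  obtain ⟨j, hj⟩ := hex
  have hψs : Function.Surjective (ϕ j) := MonoidHom.range_eq_top.1 hj
  rcases (hs j).eq_bot_or_eq_top_of_normal (ϕ j).ker inferInstance with hker | hker
  · exact ⟨j, ⟨MulEquiv.ofBijective (ϕ j) ⟨(MonoidHom.ker_eq_bot_iff (ϕ j)).1 hker, hψs⟩⟩⟩
  · exfalso
    obtain ⟨s, hs1⟩ := exists_ne (1 : S)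
    obtain ⟨x, rfl⟩ := hψs s
    have : x ∈ (ϕ j).ker := by rw [hker]; trivial
    exact hs1 (by simpa [MonoidHom.mem_ker] using this)


lemma subdirect_eq_top {A B : Type u} [Group A] [Group B] [Finite A] [Finite B]
    (hnc : ∀ (S : Type u) [Group S], Nontrivial S → ∀ (φ : A →* S) (ψ : B →* S),
      Function.Surjective φ → Function.Surjective ψ → False)
    (H : Subgroup (A × B))
    (h1 : H.map (MonoidHom.fst A B) = ⊤) (h2 : H.map (MonoidHom.snd A B) = ⊤) : H = ⊤ := by
  classical
  set p₁ : H →* A := (MonoidHom.fst A B).comp H.subtype with hp₁def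
  set p₂ : H →* B := (MonoidHom.snd A B).comp H.subtype with hp₂def
  have hp₁ : Function.Surjective p₁ := by
    intro a
    have ha : a ∈ H.map (MonoidHom.fst A B) := by rw [h1]; trivial
    obtain ⟨x, hx, hxa⟩ := ha
    exact ⟨⟨x, hx⟩, hxa⟩
  have hp₂ : Function.Surjective p₂ := by
    intro b
    have hb : b ∈ H.map (MonoidHom.snd A B) := by rw [h2]; trivial
    obtain ⟨x, hx, hxb⟩ := hb
    exact ⟨⟨x, hx⟩, hxb⟩
  set N : Subgroup H := p₁.ker ⊔ p₂.ker with hNdef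
  have hN : N.Normal := Subgroup.sup_normal _ _
  by_cases hNtop : N = ⊤
  · have key : ∀ a : A, ((a, (1 : B)) : A × B) ∈ H := by
      intro a
      obtain ⟨h, hh⟩ := hp₁ a
      have hmem : (h : H) ∈ ((p₂.ker ⊔ p₁.ker : Subgroup H) : Set H) := by
        have he : p₂.ker ⊔ p₁.ker = N := by rw [hNdef, sup_comm]
        rw [he, hNtop]; trivial
      rw [Subgroup.mul_normal] at hmem
      obtain ⟨y, hy, x, hx, rfl⟩ := hmem
      have hy2 : p₂ y = 1 := hy
      have hx1 : p₁ x = 1 := hx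
      have hyA : p₁ y = a := by
        have : p₁ (y * x) = a := hh
        rwa [map_mul, hx1, mul_one] at this
      have : ((y : A × B)) = (a, 1) := by
        ext
        · exact hyA
        · exact hy2
      rw [← this]
      exact y.2
    have key2 : ∀ b : B, (((1 : A), b) : A × B) ∈ H := by
      intro b
      obtain ⟨h, hh⟩ := hp₂ b
      have hmem : (h : H) ∈ ((p₁.ker ⊔ p₂.ker : Subgroup H) : Set H) := by
        have he : p₁.ker ⊔ p₂.ker = N := hNdef.symm
        rw [he, hNtop]; trivial
      rw [Subgroup.mul_normal] at hmem
      obtain ⟨y, hy, x, hx, rfl⟩ := hmem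
      have hy1 : p₁ y = 1 := hy
      have hx2 : p₂ x = 1 := hx
      have hyB : p₂ y = b := by
        have : p₂ (y * x) = b := hh
        rwa [map_mul, hx2, mul_one] at this
      have : ((y : A × B)) = (1, b) := by
        ext
        · exact hy1
        · exact hyB
      rw [← this]
      exact y.2
    rw [eq_top_iff]
    rintro ⟨a, b⟩ -
    have : ((a, b) : A × B) = (a, 1) * (1, b) := by simp
    rw [this]
    exact H.mul_mem (key a) (key2 b)
  · exfalso
    letI := hN
    have hnt : Nontrivial (H ⧸ N) := by
      obtain ⟨x, hx⟩ : ∃ x, x ∉ N := by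
        by_contra h
        push_neg at h
        exact hNtop ((Subgroup.eq_top_iff' N).2 h)
      exact ⟨QuotientGroup.mk x, 1, by simpa [QuotientGroup.eq_one_iff] using hx⟩
    set π : H →* H ⧸ N := QuotientGroup.mk' N with hπdef
    have hπs : Function.Surjective π := QuotientGroup.mk'_surjective N
    have hker₁ : p₁.ker ≤ π.ker := by
      rw [hπdef, QuotientGroup.ker_mk']
      exact le_sup_left
    have hker₂ : p₂.ker ≤ π.ker := by
      rw [hπdef, QuotientGroup.ker_mk']
      exact le_sup_right
    set f₁inv := Function.surjInv hp₁ with hf₁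
    set f₂inv := Function.surjInv hp₂ with hf₂
    have hr₁ : Function.RightInverse f₁inv p₁ := Function.rightInverse_surjInv hp₁
    have hr₂ : Function.RightInverse f₂inv p₂ := Function.rightInverse_surjInv hp₂
    set φ : A →* H ⧸ N := p₁.liftOfRightInverse f₁inv hr₁ ⟨π, hker₁⟩ with hφdef
    set ψ : B →* H ⧸ N := p₂.liftOfRightInverse f₂inv hr₂ ⟨π, hker₂⟩ with hψdef
    have hφs : Function.Surjective φ := by
      intro q
      obtain ⟨h, rfl⟩ := hπs q
      exact ⟨p₁ h, p₁.liftOfRightInverse_comp_apply f₁inv hr₁ ⟨π, hker₁⟩ h⟩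
    have hψs : Function.Surjective ψ := by
      intro q
      obtain ⟨h, rfl⟩ := hπs q
      exact ⟨p₂ h, p₂.liftOfRightInverse_comp_apply f₂inv hr₂ ⟨π, hker₂⟩ h⟩
    exact hnc (H ⧸ N) hnt φ ψ hφs hψs


section PiEquivs

variable {n : ℕ}

/-- Splitting off the first factor of a finite product of groups. -/
def piFinSuccMulEquiv (G : Fin (n + 1) → Type*) [∀ i, Group (G i)] :
    (∀ i, G i) ≃* G 0 × (∀ i : Fin n, G i.succ) where
  toFun f := (f 0, fun i => f i.succ)
  invFun p := Fin.cons p.1 p.2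
  left_inv f := by
    funext i
    refine Fin.cases ?_ ?_ i
    · simp
    · intro j; simp
  right_inv p := by
    refine Prod.ext ?_ ?_
    · simp
    · funext i; simp
  map_mul' f g := rfl

/-- Currying a product of groups indexed by a sigma type. -/
def piSigmaMulEquiv {ι : Type*} {κ : ι → Type*} (V : ∀ i, κ i → Type*)
    [∀ i k, Group (V i k)] :
    (∀ p : Σ i, κ i, V p.1 p.2) ≃* (∀ i, ∀ k, V i k) where
  toFun f i k := f ⟨i, k⟩
  invFun g p := g p.1 p.2
  left_inv f := by funext p; cases p; rfl
  right_inv g := rfl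
  map_mul' f g := rfl

end PiEquivs

theorem muGrp_aux : ∀ (m : ℕ) (e : Fin m → ℕ) (U : Fin m → Type u)
    [∀ i, Group (U i)] [∀ i, Finite (U i)],
    (∀ i, IsSimpleGroup (U i)) → (∀ i j, i ≠ j → IsEmpty (U i ≃* U j)) →
    muGrp (∀ i : Fin m, Fin (e i) → U i) = ∏ i, muGrp (Fin (e i) → U i)
  | 0, e, U, _, _, _, _ => by
    haveI : Subsingleton (∀ i : Fin 0, Fin (e i) → U i) :=
      ⟨fun a b => funext fun i => i.elim0⟩
    rw [muGrp_trivial]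
    simp
  | (n + 1), e, U, _, _, hsimple, hnoniso => by
    have e1 := piFinSuccMulEquiv (fun i => Fin (e i) → U i)
    rw [muGrp_congr e1]
    have hkey : ∀ H : Subgroup ((Fin (e 0) → U 0) × (∀ i : Fin n, Fin (e i.succ) → U i.succ)),
        H.map (MonoidHom.fst _ _) = ⊤ → H.map (MonoidHom.snd _ _) = ⊤ → H = ⊤ := by
      intro H h1 h2
      refine subdirect_eq_top ?_ H h1 h2
      intro S _ hS φ ψ hφ hψ
      letI : Finite S := Finite.of_surjective _ hφ
      letI : Nontrivial S := hS
      obtain ⟨N, hNnorm, hNne, hNmax⟩ := exists_max_normal S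
      letI := hNnorm
      have hsimpleQ : IsSimpleGroup (S ⧸ N) := simple_of_max_normal N hNne hNmax
      have hmks : Function.Surjective (QuotientGroup.mk' N) := QuotientGroup.mk'_surjective N
      obtain ⟨j₀, ⟨eA⟩⟩ := simple_quotient_of_pi (fun _ : Fin (e 0) => U 0)
        (fun _ => hsimple 0) hsimpleQ ((QuotientGroup.mk' N).comp φ) (hmks.comp hφ)
      have σe := piSigmaMulEquiv (fun (i : Fin n) (_ : Fin (e i.succ)) => U i.succ)
      obtain ⟨p, ⟨eB⟩⟩ := simple_quotient_of_pi
        (fun p : Σ i : Fin n, Fin (e i.succ) => U p.1.succ)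
        (fun p => hsimple p.1.succ) hsimpleQ
        (((QuotientGroup.mk' N).comp ψ).comp σe.toMonoidHom)
        ((hmks.comp hψ).comp σe.surjective)
      exact (hnoniso 0 p.1.succ (Fin.succ_ne_zero _).symm).false (eA.trans eB.symm)
    rw [muGrp_prod hkey]
    have ih := muGrp_aux n (fun i => e i.succ) (fun i => U i.succ)
      (fun i => hsimple i.succ)
      (fun i j hij => hnoniso i.succ j.succ (fun h => hij (Fin.succ_injective _ h)))
    rw [ih, Fin.prod_univ_succ]

/-- The Möbius number of a product of powers of pairwise non-isomorphic
nonabelian simple groups is the product of the Möbius numbers of the powers. -/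
theorem muGrp_prod_powers_of_simple
    {m : ℕ} (e : Fin m → ℕ) (U : Fin m → Type*) [∀ i, Group (U i)] [∀ i, Finite (U i)]
    (hsimple : ∀ i, IsSimpleGroup (U i))
    (hnonab : ∀ i, ¬ ∀ a b : U i, a * b = b * a)
    (hnoniso : ∀ i j, i ≠ j → IsEmpty (U i ≃* U j)) :
    muGrp (∀ i : Fin m, Fin (e i) → U i) = ∏ i, muGrp (Fin (e i) → U i) :=
  muGrp_aux m e U hsimple hnoniso
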